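/- Let $\mathcal{X}\subseteq\mathbb{R}^n$ be compact and $f : \mathcal{X}\times\mathbb{R}^m\to\mathbb{R}$ jointly continuous, with $f(x,\cdot)$ convex and $L_f$-smooth for each $x$, level-bounded in $y$ locally uniformly in $x\in\mathcal{X}$, and suppose $\mathcal{S}(x)=\arg\min_y f(x,y)$ is a singleton $\{y^*(x)\}$ for each $x\in\mathcal{X}$. Fix $y_0 \in \mathbb{R}^m$, $0 < s_l \le 1/L_f$, and define $y_{k+1}(x) = y_k(x) - s_l\nabla_y f(x, y_k(x))$ with $y_0(x) = y_0$. Then: (a) $\{y_K(x)\}$ is uniformly bounded over $x\in\mathcal{X}$ and $K\in\mathbb{N}$, and (b) $\sup_{x\in\mathcal{X}} |f(x, y_K(x)) - f^*(x)| \to 0$ as $K\to\infty$, where $f^*(x) = f(x, y^*(x))$. -/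

import Mathlib

open InnerProductSpace Set

variable {F : Type*} [NormedAddCommGroup F] [InnerProductSpace ℝ F] [CompleteSpace F]

lemma curve_deriv {f : F → ℝ} {g : F → F} (hg : ∀ y, HasGradientAt f (g y) y) (y v : F) (t : ℝ) :
    HasDerivAt (fun t : ℝ => f (y + t • v)) ⟪g (y + t • v), v⟫_ℝ t := by
  have hc : HasDerivAt (fun t : ℝ => y + t • v) v t := by
    simpa using ((hasDerivAt_id t).smul_const v).const_add y
  have := (hg (y + t • v)).hasFDerivAt.comp_hasDerivAt t hc
  simp at this
  exact this

lemma grad_convex_ineq {f : F → ℝ} {g : F → F} (hconv : ConvexOn ℝ Set.univ f)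
    (hg : ∀ y, HasGradientAt f (g y) y) (y z : F) :
    f y + ⟪g y, z - y⟫_ℝ ≤ f z := by
  set v := z - y with hv
  have hφconv : ConvexOn ℝ Set.univ (fun t : ℝ => f (y + t • v)) := by
    have := hconv.comp_affineMap (AffineMap.lineMap y z)
    have heq : (fun t : ℝ => f (y + t • v)) = f ∘ (AffineMap.lineMap y z) := by
      funext t
      simp [AffineMap.lineMap_apply, hv]
      rw [add_comm]
    rw [heq]
    simpa using this
  have hd : HasDerivAt (fun t : ℝ => f (y + t • v)) ⟪g (y + (0:ℝ) • v), v⟫_ℝ 0 :=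
    curve_deriv hg y v 0
  simp only [zero_smul, add_zero] at hd
  have := hφconv.le_slope_of_hasDerivAt (mem_univ (0:ℝ)) (mem_univ (1:ℝ)) one_pos hd
  rw [slope_def_field] at this
  simp only [one_smul, zero_smul, add_zero] at this
  have h1 : y + v = z := by rw [hv]; abel
  rw [h1] at this
  field_simp at this
  linarith

lemma descent_ineq {f : F → ℝ} {g : F → F} {L : ℝ} (hL : 0 ≤ L)
    (hg : ∀ y, HasGradientAt f (g y) y) (hlip : ∀ y z, ‖g y - g z‖ ≤ L * ‖y - z‖) (y z : F) :
    f z ≤ f y + ⟪g y, z - y⟫_ℝ + L / 2 * ‖z - y‖ ^ 2 := by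
  set v := z - y with hv
  set h : ℝ → ℝ := fun t => f (y + t • v) - t * ⟪g y, v⟫_ℝ - L / 2 * t ^ 2 * ‖v‖ ^ 2 with hh
  have hderiv : ∀ t : ℝ, HasDerivAt h (⟪g (y + t • v), v⟫_ℝ - ⟪g y, v⟫_ℝ - L * t * ‖v‖ ^ 2) t := by
    intro t
    have h1 := curve_deriv hg y v t
    have h2 : HasDerivAt (fun t : ℝ => t * ⟪g y, v⟫_ℝ) ⟪g y, v⟫_ℝ t := by
      simpa using (hasDerivAt_id t).mul_const ⟪g y, v⟫_ℝ
    have h3 : HasDerivAt (fun t : ℝ => L / 2 * t ^ 2 * ‖v‖ ^ 2) (L * t * ‖v‖ ^ 2) t := by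
      have : HasDerivAt (fun t : ℝ => t ^ 2) (2 * t) t := by
        simpa using (hasDerivAt_pow 2 t)
      have := (this.const_mul (L / 2)).mul_const (‖v‖ ^ 2)
      rw [show L * t * ‖v‖ ^ 2 = L / 2 * (2 * t) * ‖v‖ ^ 2 by ring]
      exact this
    have := (h1.sub h2).sub h3
    exact this
  have hanti : AntitoneOn h (Icc (0:ℝ) 1) := by
    apply antitoneOn_of_deriv_nonpos (convex_Icc 0 1)
    · exact fun t _ => (hderiv t).continuousAt.continuousWithinAt
    · intro t _
      exact (hderiv t).differentiableAt.differentiableWithinAt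
    · intro t ht
      rw [interior_Icc] at ht
      rw [(hderiv t).deriv]
      have hb : ⟪g (y + t • v) - g y, v⟫_ℝ ≤ L * t * ‖v‖ ^ 2 := by
        calc ⟪g (y + t • v) - g y, v⟫_ℝ ≤ ‖g (y + t • v) - g y‖ * ‖v‖ :=
              real_inner_le_norm _ _
          _ ≤ (L * ‖(y + t • v) - y‖) * ‖v‖ := by
              have := hlip (y + t • v) y
              simpa using mul_le_mul_of_nonneg_right this (norm_nonneg v)
          _ ≤ L * t * ‖v‖ ^ 2 := by
              rw [add_sub_cancel_left, norm_smul]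
              simp [abs_of_pos ht.1]
              nlinarith [norm_nonneg v, ht.1.le, hL]
      rw [inner_sub_left] at hb
      linarith
  have := hanti (left_mem_Icc.2 zero_le_one) (right_mem_Icc.2 zero_le_one) zero_le_one
  simp only [hh] at this
  have h1 : y + (1:ℝ) • v = z := by rw [hv]; simp
  have h0 : y + (0:ℝ) • v = y := by simp
  rw [h1, h0] at this
  simp at this
  linarith

/-- Proposition 5: for the parametric lower-level problem with singleton solution map,
the gradient descent iterates are uniformly bounded and their values converge
uniformly to the optimal values, without strong convexity. -/
theorem stmt13 {n m : ℕ} (X : Set (EuclideanSpace ℝ (Fin n))) (hX : IsCompact X)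
    (f : EuclideanSpace ℝ (Fin n) → EuclideanSpace ℝ (Fin m) → ℝ)
    (hfcont : ContinuousOn (fun p : EuclideanSpace ℝ (Fin n) × EuclideanSpace ℝ (Fin m) =>
      f p.1 p.2) (X ×ˢ Set.univ))
    (hconv : ∀ x ∈ X, ConvexOn ℝ Set.univ (f x))
    (g : EuclideanSpace ℝ (Fin n) → EuclideanSpace ℝ (Fin m) → EuclideanSpace ℝ (Fin m))
    (hgrad : ∀ x ∈ X, ∀ y, HasGradientAt (f x) (g x y) y)
    (Lf : ℝ) (hLf : 0 < Lf)
    (hlip : ∀ x ∈ X, ∀ y z, ‖g x y - g x z‖ ≤ Lf * ‖y - z‖)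
    (hlevel : ∀ x₀ ∈ X, ∀ c : ℝ, ∃ δ > (0:ℝ), ∃ B : Set (EuclideanSpace ℝ (Fin m)),
      Bornology.IsBounded B ∧ ∀ x ∈ Metric.ball x₀ δ ∩ X, {y | f x y ≤ c} ⊆ B)
    (ystar : EuclideanSpace ℝ (Fin n) → EuclideanSpace ℝ (Fin m))
    (hsingleton : ∀ x ∈ X, {y | ∀ z, f x y ≤ f x z} = {ystar x})
    (y₀ : EuclideanSpace ℝ (Fin m)) (s : ℝ) (hs : 0 < s) (hsle : s ≤ 1 / Lf)
    (yK : ℕ → EuclideanSpace ℝ (Fin n) → EuclideanSpace ℝ (Fin m))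
    (hinit : ∀ x ∈ X, yK 0 x = y₀)
    (hiter : ∀ x ∈ X, ∀ k, yK (k + 1) x = yK k x - s • g x (yK k x)) :
    (∃ C : ℝ, ∀ x ∈ X, ∀ K : ℕ, ‖yK K x‖ ≤ C) ∧
    (∀ ε > (0:ℝ), ∃ N : ℕ, ∀ K ≥ N, ∀ x ∈ X,
      |f x (yK K x) - f x (ystar x)| ≤ ε) := by
  rcases Set.eq_empty_or_nonempty X with hXe | hXne
  · subst hXe
    refine ⟨⟨0, by simp⟩, fun ε hε => ⟨0, by simp⟩⟩
  -- optimality of ystar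
  have hopt : ∀ x ∈ X, ∀ z, f x (ystar x) ≤ f x z := by
    intro x hx
    have : ystar x ∈ {y | ∀ z, f x y ≤ f x z} := by
      rw [hsingleton x hx]; exact rfl
    exact this
  -- descent step
  have hA : ∀ x ∈ X, ∀ k, f x (yK (k+1) x) + s / 2 * ‖g x (yK k x)‖ ^ 2 ≤ f x (yK k x) := by
    intro x hx k
    have hd := descent_ineq hLf.le (hgrad x hx) (hlip x hx) (yK k x) (yK (k+1) x)
    rw [hiter x hx k] at hd ⊢
    have hz : yK k x - s • g x (yK k x) - yK k x = -(s • g x (yK k x)) := by abel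
    rw [hz] at hd
    rw [inner_neg_right, inner_smul_right, real_inner_self_eq_norm_sq, norm_neg, norm_smul, Real.norm_eq_abs, abs_of_pos hs] at hd
    have hsl : Lf * s ≤ 1 := by
      rw [le_div_iff₀ hLf] at hsle; linarith
    nlinarith [sq_nonneg (‖g x (yK k x)‖), hs]
  -- monotone decrease of values
  have hmono : ∀ x ∈ X, ∀ j k : ℕ, j ≤ k → f x (yK k x) ≤ f x (yK j x) := by
    intro x hx
    have : ∀ k, f x (yK (k+1) x) ≤ f x (yK k x) := by
      intro k
      nlinarith [hA x hx k, sq_nonneg ‖g x (yK k x)‖, hs]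
    intro j k hjk
    exact antitone_nat_of_succ_le (f := fun k => f x (yK k x)) this hjk
  -- uniform bound c on f x y₀
  have hcont1 : ContinuousOn (fun x => f x y₀) X := by
    have h2 : ContinuousOn (fun x : EuclideanSpace ℝ (Fin n) => (x, y₀)) X :=
      (continuous_id.prodMk continuous_const).continuousOn
    exact hfcont.comp h2 (fun x hx => ⟨hx, mem_univ y₀⟩)
  obtain ⟨x₀, hx₀, hmax⟩ := hX.exists_isMaxOn hXne hcont1
  set c := f x₀ y₀ with hc
  have hcle : ∀ x ∈ X, f x y₀ ≤ c := fun x hx => hmax hx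
  -- finite cover from hlevel
  choose! δ hδ B hBbdd hBsub using fun x (hx : x ∈ X) => hlevel x hx c
  obtain ⟨t, htX, hcover⟩ := hX.elim_nhds_subcover (fun x => Metric.ball x (δ x))
    (fun x hx => Metric.ball_mem_nhds x (hδ x hx))
  set Bigset := ⋃ x ∈ t, B x with hBig
  have hBigbdd : Bornology.IsBounded Bigset :=
    (Bornology.isBounded_biUnion t.finite_toSet).2 (fun x hx => hBbdd x (htX x hx))
  have hkey : ∀ x ∈ X, ∀ y : EuclideanSpace ℝ (Fin m), f x y ≤ c → y ∈ Bigset := by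
    intro x hx y hy
    obtain ⟨x', hx't, hx'ball⟩ := Set.mem_iUnion₂.1 (hcover hx)
    exact Set.mem_biUnion hx't (hBsub x' (htX x' hx't) x ⟨hx'ball, hx⟩ hy)
  obtain ⟨C, hC⟩ := hBigbdd.exists_norm_le
  -- part a
  have hfK : ∀ x ∈ X, ∀ K, f x (yK K x) ≤ c := by
    intro x hx K
    calc f x (yK K x) ≤ f x (yK 0 x) := hmono x hx 0 K (Nat.zero_le K)
      _ = f x y₀ := by rw [hinit x hx]
      _ ≤ c := hcle x hx
  have hparta : ∀ x ∈ X, ∀ K, ‖yK K x‖ ≤ C := fun x hx K => hC _ (hkey x hx _ (hfK x hx K))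
  have hystarB : ∀ x ∈ X, ‖ystar x‖ ≤ C := by
    intro x hx
    apply hC _ (hkey x hx _ _)
    exact le_trans (hopt x hx y₀) (hcle x hx)
  refine ⟨⟨C, hparta⟩, ?_⟩
  -- part b
  set D := ‖y₀‖ + |C| with hD
  have hDnn : 0 ≤ D := by positivity
  have hDbnd : ∀ x ∈ X, ‖y₀ - ystar x‖ ≤ D := by
    intro x hx
    calc ‖y₀ - ystar x‖ ≤ ‖y₀‖ + ‖ystar x‖ := norm_sub_le _ _
      _ ≤ D := by have := hystarB x hx; rw [hD]; have := le_abs_self C; linarith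
  -- key recursion: Fejér-type bound
  have hB' : ∀ x ∈ X, ∀ k, ‖yK (k+1) x - ystar x‖ ^ 2 ≤ ‖yK k x - ystar x‖ ^ 2
      - 2 * s * (f x (yK (k+1) x) - f x (ystar x)) := by
    intro x hx k
    have hcvx := grad_convex_ineq (hconv x hx) (hgrad x hx) (yK k x) (ystar x)
    have hdesc := hA x hx k
    have hexp : ‖yK (k+1) x - ystar x‖ ^ 2 = ‖yK k x - ystar x‖ ^ 2
        - 2 * s * ⟪g x (yK k x), yK k x - ystar x⟫_ℝ + s ^ 2 * ‖g x (yK k x)‖ ^ 2 := by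
      rw [hiter x hx k]
      have : yK k x - s • g x (yK k x) - ystar x = (yK k x - ystar x) - s • g x (yK k x) := by
        abel
      rw [this, norm_sub_sq_real, inner_smul_right, norm_smul, Real.norm_eq_abs, abs_of_pos hs,
        real_inner_comm (yK k x - ystar x)]
      ring
    have hinner : ⟪g x (yK k x), ystar x - yK k x⟫_ℝ =
        -⟪g x (yK k x), yK k x - ystar x⟫_ℝ := by
      rw [← inner_neg_right]; congr 1; abel
    rw [hinner] at hcvx
    nlinarith [hs]
  -- induction: ‖yK K - y*‖² + 2sK(f(yK K)-f*) ≤ ‖y₀-y*‖²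
  have hrec : ∀ x ∈ X, ∀ K : ℕ, ‖yK K x - ystar x‖ ^ 2
      + 2 * s * K * (f x (yK K x) - f x (ystar x)) ≤ ‖y₀ - ystar x‖ ^ 2 := by
    intro x hx K
    induction K with
    | zero => simp [hinit x hx]
    | succ K ih =>
      have h1 := hB' x hx K
      have h2 : f x (yK (K+1) x) ≤ f x (yK K x) := hmono x hx K (K+1) (Nat.le_succ K)
      have h3 : f x (ystar x) ≤ f x (yK (K+1) x) := hopt x hx _
      have hKnn : (0:ℝ) ≤ K := Nat.cast_nonneg K
      push_cast
      nlinarith [hs, mul_nonneg (mul_nonneg hs.le hKnn) (sub_nonneg.2 h2)]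
  intro ε hε
  refine ⟨⌈D ^ 2 / (2 * s * ε)⌉₊ + 1, fun K hK x hx => ?_⟩
  have hKpos : (0:ℕ) < K := lt_of_lt_of_le (Nat.succ_pos _) hK
  have hKr : (0:ℝ) < K := Nat.cast_pos.2 hKpos
  have hKge : D ^ 2 / (2 * s * ε) ≤ (K:ℝ) := by
    calc D ^ 2 / (2 * s * ε) ≤ (⌈D ^ 2 / (2 * s * ε)⌉₊ : ℝ) := Nat.le_ceil _
      _ ≤ (K:ℝ) := by exact_mod_cast le_trans (Nat.le_succ _) hK
  have hge0 : 0 ≤ f x (yK K x) - f x (ystar x) := sub_nonneg.2 (hopt x hx _)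
  rw [abs_of_nonneg hge0]
  have h1 := hrec x hx K
  have h2 : ‖y₀ - ystar x‖ ^ 2 ≤ D ^ 2 := by
    have := hDbnd x hx
    nlinarith [norm_nonneg (y₀ - ystar x)]
  have h3 : 2 * s * K * (f x (yK K x) - f x (ystar x)) ≤ D ^ 2 := by
    nlinarith [sq_nonneg ‖yK K x - ystar x‖]
  have h4 : D ^ 2 ≤ 2 * s * ε * K := by
    rw [div_le_iff₀ (by positivity)] at hKge
    linarith [hKge]
  have h5 : 2 * s * K * (f x (yK K x) - f x (ystar x)) ≤ 2 * s * K * ε := by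
    calc 2 * s * K * (f x (yK K x) - f x (ystar x)) ≤ D ^ 2 := h3
      _ ≤ 2 * s * ε * K := h4
      _ = 2 * s * K * ε := by ring
  have hpos : 0 < 2 * s * K := by positivity
  exact le_of_mul_le_mul_left (by linarith [h5]) hpos
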